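/- Let V and F be finite-dimensional real vector spaces, J : V* → V a skew linear map, G : F → V a linear map with dual map G* : V* → F*, and Δ ⊆ F × F* a maximal isotropic subspace (Δ^⊥ = Δ with respect to the pairing metric on F × F*). Then D = {(Jα + G f, α) : α ∈ V*, f ∈ F, (f, G*α) ∈ Δ} satisfies dim D = dim V; consequently D is a maximal isotropic subspace of V × V*, i.e. D^⊥ = D (an almost Dirac structure). -/

import Mathlib

open Module LinearMap

/-- The pairing metric `g((x,α),(y,β)) = (1/2)(α(y) + β(x))` on `W × W*`. -/
noncomputable def bigG (W : Type*) [AddCommGroup W] [Module ℝ W] :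
    LinearMap.BilinForm ℝ (W × Module.Dual ℝ W) :=
  LinearMap.mk₂ ℝ (fun p q => (1 / 2 : ℝ) * (p.2 q.1 + q.2 p.1))
    (fun p p' q => by simp; ring)
    (fun c p q => by simp; ring)
    (fun p q q' => by simp; ring)
    (fun c p q => by simp; ring)

/-- The `g`-orthogonal complement of a subspace of `W × W*`. -/
noncomputable def gOrth {W : Type*} [AddCommGroup W] [Module ℝ W]
    (A : Submodule ℝ (W × Module.Dual ℝ W)) : Submodule ℝ (W × Module.Dual ℝ W) :=
  LinearMap.BilinForm.orthogonal (bigG W) A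

lemma bigG_apply {W : Type*} [AddCommGroup W] [Module ℝ W] (p q : W × Module.Dual ℝ W) :
    bigG W p q = (1 / 2 : ℝ) * (p.2 q.1 + q.2 p.1) := rfl

lemma bigG_symm {W : Type*} [AddCommGroup W] [Module ℝ W] (p q : W × Module.Dual ℝ W) :
    bigG W p q = bigG W q p := by
  simp only [bigG_apply]; ring

lemma bigG_isRefl (W : Type*) [AddCommGroup W] [Module ℝ W] : (bigG W).IsRefl := by
  intro p q h
  rw [bigG_symm]; exact h

lemma bigG_nondeg (W : Type*) [AddCommGroup W] [Module ℝ W] : (bigG W).Nondegenerate := by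
  refine (bigG_isRefl W).nondegenerate_iff_separatingLeft.mpr ?_
  intro p hp
  have h2 : p.2 = 0 := by
    ext w
    have := hp (w, 0)
    simp [bigG_apply] at this
    simpa using this
  have h1 : p.1 = 0 := by
    rw [← Module.forall_dual_apply_eq_zero_iff ℝ p.1]
    intro β
    have := hp (0, β)
    simp [bigG_apply, h2] at this
    simpa using this
  exact Prod.ext h1 h2

lemma finrank_map_inf_ker {M N : Type*} [AddCommGroup M] [Module ℝ M] [FiniteDimensional ℝ M]
    [AddCommGroup N] [Module ℝ N] (f : M →ₗ[ℝ] N) (p : Submodule ℝ M) :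
    finrank ℝ (p.map f) + finrank ℝ (LinearMap.ker f ⊓ p : Submodule ℝ M) = finrank ℝ p := by
  have h1 : p.map f = LinearMap.range (f ∘ₗ p.subtype) := by
    rw [LinearMap.range_comp, Submodule.range_subtype]
  have h2 : LinearMap.ker (f ∘ₗ p.subtype) = Submodule.comap p.subtype (LinearMap.ker f ⊓ p) := by
    rw [LinearMap.ker_comp]
    ext x
    simp [Submodule.mem_comap, x.2]
  have h3 := LinearMap.finrank_range_add_finrank_ker (f ∘ₗ p.subtype)
  rw [h2, (Submodule.comapSubtypeEquivOfLe
    (inf_le_right : LinearMap.ker f ⊓ p ≤ p)).finrank_eq] at h3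
  rw [h1]
  exact h3

lemma finrank_submodule_prod {M N : Type*} [AddCommGroup M] [Module ℝ M] [FiniteDimensional ℝ M]
    [AddCommGroup N] [Module ℝ N] [FiniteDimensional ℝ N] (p : Submodule ℝ M) (q : Submodule ℝ N) :
    finrank ℝ (p.prod q) = finrank ℝ p + finrank ℝ q := by
  have e : (p.prod q : Submodule ℝ (M × N)) ≃ₗ[ℝ] p × q :=
    { toFun := fun x => (⟨x.1.1, x.2.1⟩, ⟨x.1.2, x.2.2⟩)
      map_add' := fun x y => rfl
      map_smul' := fun c x => rfl
      invFun := fun y => ⟨(y.1.1, y.2.1), ⟨y.1.2, y.2.2⟩⟩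
      left_inv := fun x => rfl
      right_inv := fun y => rfl }
  rw [e.finrank_eq, Module.finrank_prod]

lemma orth_sup {M : Type*} [AddCommGroup M] [Module ℝ M] (B : LinearMap.BilinForm ℝ M)
    (p q : Submodule ℝ M) :
    B.orthogonal (p ⊔ q) = B.orthogonal p ⊓ B.orthogonal q := by
  ext x
  simp only [LinearMap.BilinForm.mem_orthogonal_iff, Submodule.mem_inf]
  constructor
  · intro h
    exact ⟨fun n hn => h n (Submodule.mem_sup_left hn),
      fun n hn => h n (Submodule.mem_sup_right hn)⟩
  · rintro ⟨h1, h2⟩ n hn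
    obtain ⟨a, ha, b, hb, rfl⟩ := Submodule.mem_sup.mp hn
    have ha' := h1 a ha
    have hb' := h2 b hb
    rw [map_add, LinearMap.add_apply, ha', hb', add_zero]

lemma gOrth_sup {W : Type*} [AddCommGroup W] [Module ℝ W]
    (p q : Submodule ℝ (W × Module.Dual ℝ W)) :
    gOrth (p ⊔ q) = gOrth p ⊓ gOrth q := orth_sup (bigG W) p q

/-- The linear map `(α, f) ↦ (Jα + Gf, α)` from `V* × F` to `V × V*`. -/
noncomputable def phiMap {V F : Type*} [AddCommGroup V] [Module ℝ V]
    [AddCommGroup F] [Module ℝ F] (J : Module.Dual ℝ V →ₗ[ℝ] V) (G : F →ₗ[ℝ] V) :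
    (Module.Dual ℝ V × F) →ₗ[ℝ] V × Module.Dual ℝ V :=
  ((J.comp (LinearMap.fst ℝ (Module.Dual ℝ V) F)) +
    (G.comp (LinearMap.snd ℝ (Module.Dual ℝ V) F))).prod
    (LinearMap.fst ℝ (Module.Dual ℝ V) F)

/-- The linear map `(α, f) ↦ (f, G*α)` from `V* × F` to `F × F*`. -/
noncomputable def psiMap {V F : Type*} [AddCommGroup V] [Module ℝ V]
    [AddCommGroup F] [Module ℝ F] (G : F →ₗ[ℝ] V) :
    (Module.Dual ℝ V × F) →ₗ[ℝ] F × Module.Dual ℝ F :=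
  (LinearMap.snd ℝ (Module.Dual ℝ V) F).prod
    (G.dualMap.comp (LinearMap.fst ℝ (Module.Dual ℝ V) F))

lemma phiMap_apply {V F : Type*} [AddCommGroup V] [Module ℝ V]
    [AddCommGroup F] [Module ℝ F] (J : Module.Dual ℝ V →ₗ[ℝ] V) (G : F →ₗ[ℝ] V)
    (x : Module.Dual ℝ V × F) : phiMap J G x = (J x.1 + G x.2, x.1) := rfl

lemma psiMap_apply {V F : Type*} [AddCommGroup V] [Module ℝ V]
    [AddCommGroup F] [Module ℝ F] (G : F →ₗ[ℝ] V)
    (x : Module.Dual ℝ V × F) : psiMap G x = (x.2, G.dualMap x.1) := rfl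

set_option maxHeartbeats 1000000 in
/-- If `J` is skew and `Δ ⊆ F × F*` is maximal isotropic (`Δ^⊥ = Δ`), then
`D = {(Jα + Gf, α) : (f, G*α) ∈ Δ}` has `dim D = dim V`, hence `D^⊥ = D`
(an almost Dirac structure on `V`). -/
theorem stmt18 (V F : Type*) [AddCommGroup V] [Module ℝ V] [FiniteDimensional ℝ V]
    [AddCommGroup F] [Module ℝ F] [FiniteDimensional ℝ F]
    (J : Dual ℝ V →ₗ[ℝ] V)
    (hJ : ∀ α β : Dual ℝ V, β (J α) = -α (J β))
    (G : F →ₗ[ℝ] V)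
    (Δ : Submodule ℝ (F × Dual ℝ F))
    (hΔ : gOrth Δ = Δ)
    (D : Submodule ℝ (V × Dual ℝ V))
    (hD : D = Submodule.map (phiMap J G) (Submodule.comap (psiMap G) Δ)) :
    finrank ℝ D = finrank ℝ V ∧ gOrth D = D := by
  classical
  set K : Submodule ℝ (Dual ℝ V × F) := Submodule.comap (psiMap G) Δ with hK
  set E : Submodule ℝ (F × Dual ℝ F) := (LinearMap.ker G).prod ⊥ with hE
  -- kernels and ranges
  have h_kerφ : LinearMap.ker (phiMap J G) =
      (⊥ : Submodule ℝ (Dual ℝ V)).prod (LinearMap.ker G) := by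
    ext x
    simp only [LinearMap.mem_ker, phiMap_apply, Prod.ext_iff, Submodule.mem_prod,
      Submodule.mem_bot, Prod.fst_zero, Prod.snd_zero]
    constructor
    · rintro ⟨h1, h2⟩
      refine ⟨h2, ?_⟩
      rw [h2, map_zero, zero_add] at h1
      exact h1
    · rintro ⟨h1, h2⟩
      exact ⟨by rw [h1, map_zero, zero_add]; exact h2, h1⟩
  have h_kerψ : LinearMap.ker (psiMap G) =
      (LinearMap.ker G.dualMap).prod (⊥ : Submodule ℝ F) := by
    ext x
    simp only [LinearMap.mem_ker, psiMap_apply, Prod.ext_iff, Submodule.mem_prod,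
      Submodule.mem_bot, Prod.fst_zero, Prod.snd_zero]
    tauto
  have h_rangeψ : LinearMap.range (psiMap G) =
      (⊤ : Submodule ℝ F).prod (LinearMap.range G.dualMap) := by
    ext y
    simp only [LinearMap.mem_range, psiMap_apply, Submodule.mem_prod, Submodule.mem_top,
      true_and, Prod.ext_iff]
    constructor
    · rintro ⟨x, h1, h2⟩
      exact ⟨x.1, h2⟩
    · rintro ⟨α, hα⟩
      exact ⟨(α, y.1), rfl, hα⟩
  have h_orthE : gOrth E = (⊤ : Submodule ℝ F).prod (LinearMap.range G.dualMap) := by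
    rw [LinearMap.range_dualMap_eq_dualAnnihilator_ker]
    ext x
    simp only [gOrth, LinearMap.BilinForm.mem_orthogonal_iff, Submodule.mem_prod,
      Submodule.mem_top, true_and, Submodule.mem_dualAnnihilator]
    constructor
    · intro h w hw
      have := h (w, 0) (by simp [hE, Submodule.mem_prod, hw])
      simp only [LinearMap.BilinForm.isOrtho_def, bigG_apply] at this
      simpa using this
    · intro h n hn
      rw [hE, Submodule.mem_prod] at hn
      obtain ⟨hn1, hn2⟩ := hn
      rw [Submodule.mem_bot] at hn2
      simp only [LinearMap.BilinForm.isOrtho_def, bigG_apply, hn2]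
      simp [h n.1 hn1]
  -- Δ is isotropic
  have hΔiso : ∀ a ∈ Δ, ∀ b ∈ Δ, bigG F a b = 0 := by
    intro a ha b hb
    have : b ∈ gOrth Δ := by rw [hΔ]; exact hb
    exact this a ha
  -- dimension bookkeeping
  set n := finrank ℝ V
  set m := finrank ℝ F
  have e1 : finrank ℝ (Dual ℝ V) = n := Subspace.dual_finrank_eq
  have e2 : finrank ℝ (Dual ℝ F) = m := Subspace.dual_finrank_eq
  have e3 : finrank ℝ (F × Dual ℝ F) = m + m := by
    rw [Module.finrank_prod, e2]
  have horthΔ := LinearMap.BilinForm.finrank_orthogonal (bigG_nondeg F) Δ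
  have e4 : finrank ℝ Δ = m := by
    have hle : finrank ℝ Δ ≤ m + m := e3 ▸ Submodule.finrank_le Δ
    have : finrank ℝ (gOrth Δ) = finrank ℝ Δ := by rw [hΔ]
    rw [e3] at horthΔ
    change finrank ℝ (gOrth Δ) = m + m - finrank ℝ Δ at horthΔ
    omega
  have e5 : finrank ℝ (LinearMap.range G.dualMap) = finrank ℝ (LinearMap.range G) :=
    LinearMap.finrank_range_dualMap_eq_finrank_range G
  have e6 : finrank ℝ (LinearMap.range G) + finrank ℝ (LinearMap.ker G) = m :=
    LinearMap.finrank_range_add_finrank_ker G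
  have e7 : finrank ℝ E = finrank ℝ (LinearMap.ker G) := by
    rw [hE, finrank_submodule_prod, finrank_bot, add_zero]
  have e8 := Submodule.finrank_sup_add_finrank_inf_eq Δ E
  have horthSup := LinearMap.BilinForm.finrank_orthogonal (bigG_nondeg F) (Δ ⊔ E)
  rw [e3] at horthSup
  change finrank ℝ (gOrth (Δ ⊔ E)) = m + m - finrank ℝ ↥(Δ ⊔ E) at horthSup
  have e10 : finrank ℝ ↥(Δ ⊔ E) ≤ m + m :=
    e3 ▸ Submodule.finrank_le _
  -- map ψ K = gOrth (Δ ⊔ E)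
  have e11 : Submodule.map (psiMap G) K = gOrth (Δ ⊔ E) := by
    rw [hK, Submodule.map_comap_eq, h_rangeψ, ← h_orthE]
    show gOrth E ⊓ Δ = _
    rw [gOrth_sup, hΔ, inf_comm]
  have e12 := finrank_map_inf_ker (psiMap G) K
  have e13 : LinearMap.ker (psiMap G) ⊓ K = LinearMap.ker (psiMap G) := by
    rw [inf_eq_left]
    intro x hx
    rw [LinearMap.mem_ker] at hx
    show psiMap G x ∈ Δ
    rw [hx]
    exact Δ.zero_mem
  have e14 : finrank ℝ (LinearMap.ker (psiMap G)) = finrank ℝ (LinearMap.ker G.dualMap) := by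
    rw [h_kerψ, finrank_submodule_prod, finrank_bot, add_zero]
  have e15 : finrank ℝ (LinearMap.range G.dualMap) + finrank ℝ (LinearMap.ker G.dualMap) = n := by
    rw [← e1]
    exact LinearMap.finrank_range_add_finrank_ker G.dualMap
  have e16 := finrank_map_inf_ker (phiMap J G) K
  have e17 := finrank_map_inf_ker (psiMap G) (LinearMap.ker (phiMap J G) ⊓ K)
  have e18 : LinearMap.ker (psiMap G) ⊓ (LinearMap.ker (phiMap J G) ⊓ K) = ⊥ := by
    rw [eq_bot_iff]
    intro x hx
    rw [Submodule.mem_inf, Submodule.mem_inf] at hx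
    obtain ⟨hx1, hx2, -⟩ := hx
    rw [LinearMap.mem_ker, psiMap_apply, Prod.ext_iff] at hx1
    rw [LinearMap.mem_ker, phiMap_apply, Prod.ext_iff] at hx2
    rw [Submodule.mem_bot, Prod.ext_iff]
    exact ⟨hx2.2, hx1.1⟩
  have e19 : Submodule.map (psiMap G) (LinearMap.ker (phiMap J G) ⊓ K) = Δ ⊓ E := by
    ext y
    constructor
    · intro hy
      obtain ⟨x, hxmem, rfl⟩ := Submodule.mem_map.mp hy
      rw [Submodule.mem_inf] at hxmem
      obtain ⟨hx1, hx2⟩ := hxmem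
      rw [LinearMap.mem_ker, phiMap_apply, Prod.ext_iff] at hx1
      have hx1' : x.1 = 0 := hx1.2
      have hGx2 : G x.2 = 0 := by
        have := hx1.1
        rw [hx1', map_zero, zero_add] at this
        exact this
      refine Submodule.mem_inf.mpr ⟨hx2, ?_⟩
      rw [hE, Submodule.mem_prod, psiMap_apply]
      exact ⟨hGx2, by simp [hx1']⟩
    · rintro hy
      rw [Submodule.mem_inf] at hy
      obtain ⟨hyΔ, hyE⟩ := hy
      rw [hE, Submodule.mem_prod, Submodule.mem_bot] at hyE
      refine Submodule.mem_map.mpr ⟨(0, y.1), Submodule.mem_inf.mpr ⟨?_, ?_⟩, ?_⟩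
      · rw [LinearMap.mem_ker, phiMap_apply]
        simp [Prod.ext_iff, LinearMap.mem_ker.mp hyE.1]
      · show psiMap G (0, y.1) ∈ Δ
        rw [psiMap_apply]
        simpa [← hyE.2] using hyΔ
      · rw [psiMap_apply]
        simp [← hyE.2]
  rw [e11] at e12
  rw [e13, e14] at e12
  rw [e18, e19, finrank_bot, add_zero] at e17
  have hDK : finrank ℝ D + finrank ℝ ↥(LinearMap.ker (phiMap J G) ⊓ K) = finrank ℝ K := by
    rw [hD]; exact e16
  have hdim : finrank ℝ D = n := by omega
  refine ⟨hdim, ?_⟩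
  -- isotropy
  have hiso : D ≤ gOrth D := by
    rw [hD]
    intro y hy
    obtain ⟨x, hx, rfl⟩ := Submodule.mem_map.mp hy
    refine LinearMap.BilinForm.mem_orthogonal_iff.mpr ?_
    intro z hz
    obtain ⟨w, hw, rfl⟩ := Submodule.mem_map.mp hz
    have hx' : psiMap G x ∈ Δ := hx
    have hw' : psiMap G w ∈ Δ := hw
    have h2 := hΔiso _ hx' _ hw'
    simp only [bigG_apply, psiMap_apply, LinearMap.dualMap_apply] at h2
    simp only [bigG_apply, phiMap_apply, map_add]
    have h3 := hJ x.1 w.1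
    rw [h3]
    linarith [h2]
  -- maximality by dimension
  have horthD := LinearMap.BilinForm.finrank_orthogonal (bigG_nondeg V) D
  have eV : finrank ℝ (V × Dual ℝ V) = n + n := by rw [Module.finrank_prod, e1]
  rw [eV, hdim] at horthD
  change finrank ℝ (gOrth D) = n + n - n at horthD
  have : finrank ℝ (gOrth D) ≤ finrank ℝ D := by omega
  exact (Submodule.eq_of_le_of_finrank_le hiso this).symm
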